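/- arXiv:1011.5229 — 6 statements merged into one kernel-verified Lean document; each statement's English description precedes it below -/
import Mathlib

section
/- Let n ≥ 2 and let τ be a Hermitian positive semidefinite 2^n × 2^n matrix, written in the computational basis as τ = Σ_{I,J} c_{IJ} |I⟩⟨J| over binary strings I, J of length n. Suppose that for every pair of distinct qubit positions k, ℓ and every real t with e^{2it} ≠ 1, τ is invariant under conjugation by the local operator that applies diag(e^{it},e^{-it}) at qubit k and diag(e^{-it},e^{it}) at qubit ℓ (identity elsewhere). Then c_{IJ} ≠ 0 implies J = I or J = I^c, where I^c is the bitwise complement of I. -/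
open Matrix Complex
open scoped ComplexOrder

noncomputable section

/-- Tensor (Kronecker) product of `n` local 2×2 operators, acting on `(ℂ²)^{⊗n}`
indexed by binary strings `Fin n → Fin 2`. -/
def tensorLocal {n : ℕ} (g : Fin n → Matrix (Fin 2) (Fin 2) ℂ) :
    Matrix (Fin n → Fin 2) (Fin n → Fin 2) ℂ :=
  Matrix.of fun I J => ∏ i, g i (I i) (J i)

/-- Unitary permuting the tensor factors of `(ℂ²)^{⊗n}`. -/
def permMatrix {n : ℕ} (π : Equiv.Perm (Fin n)) :
    Matrix (Fin n → Fin 2) (Fin n → Fin 2) ℂ :=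
  Matrix.of fun I J => if (∀ i, I i = J (π i)) then 1 else 0

/-- A state is symmetric if it is invariant under conjugation by all
tensor-factor permutations. -/
def SymmetricState {n : ℕ} (ρ : Matrix (Fin n → Fin 2) (Fin n → Fin 2) ℂ) : Prop :=
  ∀ π : Equiv.Perm (Fin n), permMatrix π * ρ * (permMatrix π)ᴴ = ρ

/-- Bit complement. -/
def flipBit : Fin 2 → Fin 2 := fun x => if x = 0 then 1 else 0

/-- `exp(-itZ/2) = diag(e^{-it/2}, e^{it/2})`. -/
def expZ (t : ℝ) : Matrix (Fin 2) (Fin 2) ℂ :=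
  Matrix.diagonal ![Complex.exp (-(Complex.I * t) / 2), Complex.exp (Complex.I * t / 2)]

/-- `diag(e^{it}, e^{-it})`. -/
def diagZ (t : ℝ) : Matrix (Fin 2) (Fin 2) ℂ :=
  Matrix.diagonal ![Complex.exp (Complex.I * t), Complex.exp (-(Complex.I * t))]

/-- Pauli X. -/
def X2 : Matrix (Fin 2) (Fin 2) ℂ := !![0, 1; 1, 0]

/-- Matrix unit `|I⟩⟨J|`. -/
def matUnit {n : ℕ} (I J : Fin n → Fin 2) :
    Matrix (Fin n → Fin 2) (Fin n → Fin 2) ℂ :=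
  Matrix.single I J 1

/-- Density matrix: positive semidefinite with trace 1. -/
def IsDensityMatrix {n : ℕ} (ρ : Matrix (Fin n → Fin 2) (Fin n → Fin 2) ℂ) : Prop :=
  ρ.PosSemidef ∧ ρ.trace = 1

/-- Projector `|ψ⟩⟨ψ|` of a (not necessarily normalized) state vector. -/
def projector {n : ℕ} (ψ : (Fin n → Fin 2) → ℂ) :
    Matrix (Fin n → Fin 2) (Fin n → Fin 2) ℂ :=
  Matrix.of fun I J => ψ I * (starRingEnd ℂ) (ψ J)

/-- The n-qubit GHZ state vector `(|0⋯0⟩+|1⋯1⟩)/√2`. -/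
def ghz (n : ℕ) : (Fin n → Fin 2) → ℂ := fun I =>
  if I = (fun _ => 0) then ((1 / Real.sqrt 2 : ℝ) : ℂ)
  else if I = (fun _ => 1) then ((1 / Real.sqrt 2 : ℝ) : ℂ) else 0

/-- The Dicke state `|D_n^{(k)}⟩`. -/
def dicke (n k : ℕ) : (Fin n → Fin 2) → ℂ := fun I =>
  if (∑ i, (I i : ℕ)) = k then ((1 / Real.sqrt (n.choose k) : ℝ) : ℂ) else 0

/-- The singlet state `(|01⟩ - |10⟩)/√2`. -/
def singlet : (Fin 2 → Fin 2) → ℂ := fun I =>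
  if I 0 = 0 ∧ I 1 = 1 then ((1 / Real.sqrt 2 : ℝ) : ℂ)
  else if I 0 = 1 ∧ I 1 = 0 then -((1 / Real.sqrt 2 : ℝ) : ℂ) else 0

/-- Unnormalized symmetrization of `n` one-qubit states. -/
def symmetrization {n : ℕ} (ψs : Fin n → (Fin 2 → ℂ)) : (Fin n → Fin 2) → ℂ :=
  fun I => ∑ π : Equiv.Perm (Fin n), ∏ i, ψs (π i) (I i)

/-- The 1-qubit reduced density matrix at position `j` (partial trace over the
other factors). -/
def reduced1 {n : ℕ} (ρ : Matrix (Fin n → Fin 2) (Fin n → Fin 2) ℂ) (j : Fin n) :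
    Matrix (Fin 2) (Fin 2) ℂ :=
  Matrix.of fun x y => ∑ I : Fin n → Fin 2,
    if I j = x then ρ I (Function.update I j y) else 0

lemma star_exp' (z : ℂ) : star (Complex.exp z) = Complex.exp (star z) :=
  (Complex.exp_conj z).symm

lemma fin2_cases (x : Fin 2) : x = 0 ∨ x = 1 := by omega

lemma diagZ_zero (s : ℝ) : diagZ s 0 0 = Complex.exp (Complex.I * s) := by simp [diagZ]
lemma diagZ_one (s : ℝ) : diagZ s 1 1 = Complex.exp (-(Complex.I * s)) := by simp [diagZ]

lemma star_I_mul (s : ℝ) : star (Complex.I * (s : ℂ)) = -(Complex.I * s) := by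
  simp [Complex.star_def, _root_.map_mul, Complex.conj_I, Complex.conj_ofReal]

lemma star_diagZ (s : ℝ) (x : Fin 2) :
    star (diagZ s x x) = diagZ (-s) x x := by
  rcases fin2_cases x with h | h <;> subst h
  · rw [diagZ_zero, diagZ_zero, star_exp', star_I_mul]
    push_cast; ring_nf
  · rw [diagZ_one, diagZ_one, star_exp']
    push_cast
    congr 1
    rw [star_neg, star_I_mul]; ring

lemma diagZ_self_mul_star (s : ℝ) (x : Fin 2) :
    diagZ s x x * star (diagZ s x x) = 1 := by
  rw [star_diagZ]
  rcases fin2_cases x with h | h <;> subst h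
  · rw [diagZ_zero, diagZ_zero, ← Complex.exp_add]
    push_cast
    rw [show Complex.I * (s:ℂ) + Complex.I * (-s) = 0 by ring, Complex.exp_zero]
  · rw [diagZ_one, diagZ_one, ← Complex.exp_add]
    push_cast
    rw [show -(Complex.I * (s:ℂ)) + -(Complex.I * (-s)) = 0 by ring, Complex.exp_zero]

lemma diagZ_ne_mul_star (s : ℝ) (x y : Fin 2) (h : x ≠ y) :
    diagZ s x x * star (diagZ s y y) = Complex.exp (2 * Complex.I * s) ∨
    diagZ s x x * star (diagZ s y y) = Complex.exp (-(2 * Complex.I * s)) := by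
  rw [star_diagZ]
  rcases fin2_cases x with hx | hx <;> rcases fin2_cases y with hy | hy <;> subst hx <;> subst hy
  · exact absurd rfl h
  · left
    rw [diagZ_zero, diagZ_one, ← Complex.exp_add]
    push_cast
    congr 1; ring
  · right
    rw [diagZ_one, diagZ_zero, ← Complex.exp_add]
    push_cast
    congr 1; ring
  · exact absurd rfl h

lemma tensor_diag {n : ℕ} (k l : Fin n) (hkl : k ≠ l) (t : ℝ) :
    (tensorLocal fun i => if i = k then diagZ t else if i = l then diagZ (-t) else 1) =
      Matrix.diagonal (fun I => diagZ t (I k) (I k) * diagZ (-t) (I l) (I l)) := by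
  ext I J
  by_cases h : I = J
  · subst h
    rw [Matrix.diagonal_apply_eq]
    simp only [tensorLocal, Matrix.of_apply]
    have key : ∀ i, (if i = k then diagZ t else if i = l then diagZ (-t) else 1) (I i) (I i)
        = (if i = k then diagZ t (I i) (I i) else 1) *
          (if i = l then diagZ (-t) (I i) (I i) else 1) := by
      intro i
      by_cases h1 : i = k
      · subst h1
        have : i ≠ l := hkl
        simp [this]
      · by_cases h2 : i = l
        · subst h2; simp [h1]
        · simp [h1, h2, Matrix.one_apply]
    rw [Finset.prod_congr rfl (fun i _ => key i), Finset.prod_mul_distrib,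
      Finset.prod_ite_eq' Finset.univ k (fun i => diagZ t (I i) (I i)),
      Finset.prod_ite_eq' Finset.univ l (fun i => diagZ (-t) (I i) (I i))]
    simp
  · obtain ⟨i, hi⟩ := Function.ne_iff.mp h
    rw [Matrix.diagonal_apply_ne _ h]
    simp only [tensorLocal, Matrix.of_apply]
    apply Finset.prod_eq_zero (Finset.mem_univ i)
    by_cases h1 : i = k
    · subst h1; simp [diagZ, Matrix.diagonal_apply_ne _ hi]
    · by_cases h2 : i = l
      · subst h2; simp [h1, diagZ, Matrix.diagonal_apply_ne _ hi]
      · simp [h1, h2, Matrix.one_apply, hi]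

/-- If a Hermitian PSD `τ` is invariant under conjugation by
`diag(e^{it},e^{-it})` at qubit `k` and `diag(e^{-it},e^{it})` at qubit `ℓ`
for all such nontrivial operators, then only coefficients `c_{IJ}` with
`J = I` or `J = I^c` can be nonzero. -/
theorem invariance_forces_ghz_form {n : ℕ} (hn : 2 ≤ n)
    (τ : Matrix (Fin n → Fin 2) (Fin n → Fin 2) ℂ) (hτ : τ.PosSemidef)
    (hinv : ∀ k ℓ : Fin n, k ≠ ℓ → ∀ t : ℝ, Complex.exp (2 * Complex.I * t) ≠ 1 →
      (tensorLocal fun i => if i = k then diagZ t else if i = ℓ then diagZ (-t) else 1) * τ *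
        (tensorLocal fun i => if i = k then diagZ t else if i = ℓ then diagZ (-t) else 1)ᴴ = τ) :
    ∀ I J : Fin n → Fin 2, τ I J ≠ 0 → J = I ∨ J = fun i => flipBit (I i) := by
  intro I J hIJ
  by_contra hcon
  push_neg at hcon
  obtain ⟨h1, h2⟩ := hcon
  obtain ⟨a, ha⟩ := Function.ne_iff.mp h1
  have hflip : ∀ x y : Fin 2, x ≠ y → x = flipBit y := by decide
  have hb : ∃ b, J b = I b := by
    by_contra h
    push_neg at h
    exact h2 (funext fun i => hflip _ _ (h i))
  obtain ⟨b, hb⟩ := hb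
  have hab : a ≠ b := fun h => ha (h ▸ hb)
  set t : ℝ := Real.pi / 2 with htdef
  have ht : Complex.exp (2 * Complex.I * t) ≠ 1 := by
    have e : (2 : ℂ) * Complex.I * (t : ℂ) = (Real.pi : ℂ) * Complex.I := by
      rw [htdef]; push_cast; ring
    rw [e, Complex.exp_pi_mul_I]
    norm_num
  have hinv' := hinv a b hab t ht
  rw [tensor_diag a b hab t] at hinv'
  set d : (Fin n → Fin 2) → ℂ := fun K => diagZ t (K a) (K a) * diagZ (-t) (K b) (K b) with hd
  have key : (Matrix.diagonal d * τ * (Matrix.diagonal d)ᴴ) I J = τ I J := by rw [hinv']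
  rw [Matrix.diagonal_conjTranspose, Matrix.mul_diagonal, Matrix.diagonal_mul] at key
  simp only [Pi.star_apply, Function.comp_apply] at key
  have key2 : d I * star (d J) = 1 := by
    have h3 : d I * star (d J) * τ I J = 1 * τ I J := by
      rw [one_mul]
      linear_combination key
    exact mul_right_cancel₀ hIJ h3
  rw [hd] at key2
  simp only [star_mul'] at key2
  have keq : (diagZ t (I a) (I a) * star (diagZ t (J a) (J a))) *
      (diagZ (-t) (I b) (I b) * star (diagZ (-t) (J b) (J b))) = 1 := by
    rw [← key2]; ring
  rw [hb, diagZ_self_mul_star, mul_one] at keq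
  rcases diagZ_ne_mul_star t (I a) (J a) (Ne.symm ha) with h | h
  · rw [h] at keq; exact ht keq
  · rw [h] at keq
    apply ht
    rw [show (2 : ℂ) * Complex.I * (t : ℂ) = -(-(2 * Complex.I * t)) by ring,
      Complex.exp_neg, keq]
    norm_num
end
end

section
/- Let τ = a|0⋯0⟩⟨0⋯0| + b|0⋯0⟩⟨1⋯1| + b|1⋯1⟩⟨0⋯0| + (1−a)|1⋯1⟩⟨1⋯1| and τ' = a'|0⋯0⟩⟨0⋯0| + b'|0⋯0⟩⟨1⋯1| + b'|1⋯1⟩⟨0⋯0| + (1−a')|1⋯1⟩⟨1⋯1| be n-qubit density matrices with a, a', b, b' real and b, b' ≥ 0. If τ and τ' have equal 1-qubit reduced density matrices and equal multisets of eigenvalues, then b = b' and (a = a' or a = 1 − a'); moreover in the case a = 1 − a', conjugating τ' by X^{⊗n} (where X = !![0,1;1,0]) yields τ. -/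
open Matrix Complex
open scoped ComplexOrder

noncomputable section

lemma trace_stdBasis {m : Type*} [Fintype m] [DecidableEq m] (i j : m) (c : ℂ) :
    (Matrix.single i j c).trace = if i = j then c else 0 := by
  by_cases h : i = j
  · subst h
    simp [Matrix.trace, Matrix.diag, Matrix.single, Finset.sum_ite_eq]
  · simp only [h, if_false, Matrix.trace, Matrix.diag]
    refine Finset.sum_eq_zero fun k _ => ?_
    simp only [Matrix.single, Matrix.of_apply, ite_eq_right_iff, and_imp]
    rintro rfl rfl; exact absurd rfl h

lemma sum_sq_eig {m : Type*} [Fintype m] [DecidableEq m] {A : Matrix m m ℂ} (hA : A.IsHermitian) :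
    ((∑ i, (hA.eigenvalues i)^2 : ℝ) : ℂ) = (A * A).trace := by
  conv_rhs => rw [hA.spectral_theorem, Unitary.conjStarAlgAut_apply]
  set U := (Matrix.IsHermitian.eigenvectorUnitary hA : Matrix m m ℂ) with hUdef
  set D := Matrix.diagonal (RCLike.ofReal ∘ hA.eigenvalues : m → ℂ) with hD
  have hU : star U * U = 1 :=
    Matrix.mem_unitaryGroup_iff'.mp (Matrix.IsHermitian.eigenvectorUnitary hA).2
  have key : (U * D * star U) * (U * D * star U) = U * (D * D) * star U := by
    simp only [Matrix.mul_assoc]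
    rw [show star U * (U * (D * star U)) = D * star U from by
      rw [← Matrix.mul_assoc, hU, Matrix.one_mul]]
  rw [key, Matrix.trace_mul_cycle, hU, Matrix.one_mul, hD, Matrix.diagonal_mul_diagonal,
    Matrix.trace_diagonal]
  push_cast [Function.comp]
  exact Finset.sum_congr rfl fun x _ => sq (hA.eigenvalues x : ℂ)

lemma X2_apply (x y : Fin 2) : X2 x y = if y = flipBit x then 1 else 0 := by
  fin_cases x <;> fin_cases y <;> simp [X2, flipBit]

lemma flipBit_flipBit (x : Fin 2) : flipBit (flipBit x) = x := by
  fin_cases x <;> simp [flipBit]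

lemma tensorX_apply {n : ℕ} (K L : Fin n → Fin 2) :
    (tensorLocal fun _ : Fin n => X2) K L = if L = (fun i => flipBit (K i)) then 1 else 0 := by
  simp only [tensorLocal, Matrix.of_apply, X2_apply]
  by_cases h : L = fun i => flipBit (K i)
  · rw [if_pos h]
    refine Finset.prod_eq_one fun i _ => ?_
    rw [if_pos (congrFun h i)]
  · rw [if_neg h]
    obtain ⟨i, hi⟩ := Function.ne_iff.mp h
    exact Finset.prod_eq_zero (Finset.mem_univ i) (if_neg hi)

lemma flipFn_eq_iff {n : ℕ} (P Q : Fin n → Fin 2) :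
    (P = fun i => flipBit (Q i)) ↔ ((fun i => flipBit (P i)) = Q) := by
  constructor <;> intro h <;> funext i
  · rw [congrFun h i, flipBit_flipBit]
  · rw [← congrFun h i, flipBit_flipBit]

lemma conj_unit {n : ℕ} (I J : Fin n → Fin 2) :
    (tensorLocal fun _ : Fin n => X2) * matUnit I J *
      (tensorLocal fun _ : Fin n => X2)ᴴ =
    matUnit (fun i => flipBit (I i)) (fun i => flipBit (J i)) := by
  have hTl : ∀ (M : Matrix (Fin n → Fin 2) (Fin n → Fin 2) ℂ) K L,
      ((tensorLocal fun _ : Fin n => X2) * M) K L = M (fun i => flipBit (K i)) L := by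
    intro M K L
    rw [Matrix.mul_apply]
    simp [tensorX_apply, ite_mul, one_mul, zero_mul, Finset.sum_ite_eq']
  have hTr : ∀ (M : Matrix (Fin n → Fin 2) (Fin n → Fin 2) ℂ) K L,
      (M * (tensorLocal fun _ : Fin n => X2)ᴴ) K L = M K (fun i => flipBit (L i)) := by
    intro M K L
    rw [Matrix.mul_apply]
    simp [Matrix.conjTranspose_apply, tensorX_apply, apply_ite (star : ℂ → ℂ), mul_ite,
      mul_one, mul_zero, Finset.sum_ite_eq]
  ext K L
  rw [hTr, hTl]
  simp only [matUnit, Matrix.single, Matrix.of_apply]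
  congr 1
  rw [eq_iff_iff]
  exact and_congr (flipFn_eq_iff I K) (flipFn_eq_iff J L)

lemma conj_ghz {n : ℕ} (α β γ δ : ℂ) :
    (tensorLocal fun _ : Fin n => X2) *
      (α • matUnit (fun _ => 0) (fun _ => 0) + β • matUnit (fun _ => 0) (fun _ => 1) +
       γ • matUnit (fun _ => 1) (fun _ => 0) + δ • matUnit (fun _ => 1) (fun _ => 1)) *
      (tensorLocal fun _ : Fin n => X2)ᴴ =
    δ • matUnit (fun _ => 0) (fun _ => 0) + γ • matUnit (fun _ => 0) (fun _ => 1) +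
    β • matUnit (fun _ => 1) (fun _ => 0) + α • matUnit (fun _ => 1) (fun _ => 1) := by
  have h0 : (fun i : Fin n => flipBit ((fun _ => (0:Fin 2)) i)) = fun _ => 1 :=
    funext fun i => rfl
  have h1 : (fun i : Fin n => flipBit ((fun _ => (1:Fin 2)) i)) = fun _ => 0 :=
    funext fun i => rfl
  simp only [Matrix.mul_add, Matrix.add_mul, Matrix.mul_smul, Matrix.smul_mul, conj_unit,
    h0, h1]
  abel

lemma reduced_00 {n : ℕ} (hn : 1 ≤ n) (x y z w : ℂ) :
    reduced1 (x • matUnit (fun _ => 0) (fun _ => 0) + y • matUnit (fun _ => 0) (fun _ => 1) +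
      z • matUnit (fun _ => 1) (fun _ => 0) + w • matUnit (fun _ => 1) (fun _ => 1))
      (⟨0, hn⟩ : Fin n) 0 0 = x := by
  have h01 : ((fun _ : Fin n => (0:Fin 2))) ≠ (fun _ => 1) :=
    fun h => absurd (congrFun h ⟨0, hn⟩) (by decide)
  set ρ := x • matUnit (fun _ => 0) (fun _ => 0) + y • matUnit (fun _ => 0) (fun _ => 1) +
      z • matUnit (fun _ => 1) (fun _ => 0) +
      w • matUnit (fun _ => 1) (fun _ => 1) with hρ
  show (∑ I : Fin n → Fin 2,
      if I ⟨0, hn⟩ = 0 then ρ I (Function.update I ⟨0, hn⟩ 0) else 0) = x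
  have hpt : ∀ I : Fin n → Fin 2,
      (if I ⟨0, hn⟩ = 0 then ρ I (Function.update I ⟨0, hn⟩ 0) else 0) =
      (if I = (fun _ => 0) then x else 0) := by
    intro I
    by_cases hI : I = fun _ => 0
    · subst hI
      have hup : Function.update (fun _ : Fin n => (0:Fin 2)) ⟨0, hn⟩ 0 = fun _ => 0 :=
        Function.update_eq_self _ _
      rw [if_pos rfl, if_pos rfl, hup]
      simp [hρ, matUnit, Matrix.single, h01.symm]
    · rw [if_neg hI]
      by_cases hj : I ⟨0, hn⟩ = 0
      · rw [if_pos hj]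
        have hI1 : ((fun _ : Fin n => (1:Fin 2))) ≠ I := by
          intro h
          rw [← h] at hj
          exact absurd (show (1:Fin 2) = 0 from hj) (by decide)
        have hI0 : ((fun _ : Fin n => (0:Fin 2))) ≠ I := fun h => hI h.symm
        simp [hρ, matUnit, Matrix.single, hI0, hI1]
      · rw [if_neg hj]
  rw [Finset.sum_congr rfl fun I _ => hpt I, Finset.sum_ite_eq' Finset.univ _ (fun _ => x),
    if_pos (Finset.mem_univ _)]

lemma trace_sq {n : ℕ} (hn : 1 ≤ n) (x y : ℂ) :
    ((x • matUnit (fun _ : Fin n => 0) (fun _ => 0) + y • matUnit (fun _ => 0) (fun _ => 1) +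
      y • matUnit (fun _ => 1) (fun _ => 0) + (1 - x) • matUnit (fun _ => 1) (fun _ => 1)) *
     (x • matUnit (fun _ : Fin n => 0) (fun _ => 0) + y • matUnit (fun _ => 0) (fun _ => 1) +
      y • matUnit (fun _ => 1) (fun _ => 0) + (1 - x) • matUnit (fun _ => 1) (fun _ => 1))).trace
    = x*x + y*y + y*y + (1-x)*(1-x) := by
  have h01 : ((fun _ : Fin n => (0:Fin 2))) ≠ (fun _ => 1) :=
    fun h => absurd (congrFun h ⟨0, hn⟩) (by decide)
  have z1 : ∀ (I L : Fin n → Fin 2) (c d : ℂ),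
      Matrix.single I (fun _ => (0:Fin 2)) c *
        Matrix.single (fun _ => 1) L d = 0 :=
    fun I L c d => Matrix.single_mul_single_of_ne (c := c) (i := I) (h := h01) (d := d)
  have z2 : ∀ (I L : Fin n → Fin 2) (c d : ℂ),
      Matrix.single I (fun _ => (1:Fin 2)) c *
        Matrix.single (fun _ => 0) L d = 0 :=
    fun I L c d => Matrix.single_mul_single_of_ne (c := c) (i := I) (h := h01.symm) (d := d)
  simp only [matUnit, Matrix.mul_add, Matrix.add_mul, Matrix.mul_smul, Matrix.smul_mul,
    Matrix.single_mul_single_same, z1, z2, smul_zero, Matrix.trace_add, Matrix.trace_smul,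
    trace_stdBasis, if_pos rfl, if_neg h01, if_neg h01.symm, add_zero, zero_add,
    smul_eq_mul, mul_one, mul_zero, if_true]

/-- Two GHZ-like density matrices with equal 1-qubit reduced density matrices
and equal eigenvalue multisets satisfy `b = b'` and `a = a'` or `a = 1 - a'`;
in the latter case conjugation by `X^{⊗n}` converts one to the other. -/
theorem ghz_form_determined {n : ℕ} (hn : 1 ≤ n) (a a' b b' : ℝ)
    (hb : 0 ≤ b) (hb' : 0 ≤ b')
    (τ τ' : Matrix (Fin n → Fin 2) (Fin n → Fin 2) ℂ)
    (hτ : τ = (a : ℂ) • matUnit (fun _ => 0) (fun _ => 0) +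
      (b : ℂ) • matUnit (fun _ => 0) (fun _ => 1) +
      (b : ℂ) • matUnit (fun _ => 1) (fun _ => 0) +
      ((1 : ℂ) - (a : ℂ)) • matUnit (fun _ => 1) (fun _ => 1))
    (hτ' : τ' = (a' : ℂ) • matUnit (fun _ => 0) (fun _ => 0) +
      (b' : ℂ) • matUnit (fun _ => 0) (fun _ => 1) +
      (b' : ℂ) • matUnit (fun _ => 1) (fun _ => 0) +
      ((1 : ℂ) - (a' : ℂ)) • matUnit (fun _ => 1) (fun _ => 1))
    (hd : IsDensityMatrix τ) (hd' : IsDensityMatrix τ')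
    (hred : ∀ j : Fin n, reduced1 τ j = reduced1 τ' j)
    (heig : ∃ σ : Equiv.Perm (Fin n → Fin 2),
      ∀ i, hd.1.1.eigenvalues i = hd'.1.1.eigenvalues (σ i)) :
    b = b' ∧ (a = a' ∨ a = 1 - a') ∧
      (a = 1 - a' →
        (tensorLocal fun _ : Fin n => X2) * τ' * (tensorLocal fun _ : Fin n => X2)ᴴ = τ) := by
  subst hτ hτ'
  have h01 : ((fun _ : Fin n => (0:Fin 2))) ≠ (fun _ => 1) :=
    fun h => absurd (congrFun h ⟨0, hn⟩) (by decide)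
  -- a = a' from reduced density matrices
  have h00 := congrFun (congrFun (hred ⟨0, hn⟩) 0) 0
  rw [reduced_00 hn, reduced_00 hn] at h00
  have haa : a = a' := Complex.ofReal_inj.mp h00
  -- equal sums of squared eigenvalues
  obtain ⟨σ, hσ⟩ := heig
  have hsum : ∑ i, hd.1.1.eigenvalues i ^ 2 = ∑ i, hd'.1.1.eigenvalues i ^ 2 := by
    calc ∑ i, hd.1.1.eigenvalues i ^ 2 = ∑ i, hd'.1.1.eigenvalues (σ i) ^ 2 := by
          exact Finset.sum_congr rfl fun i _ => by rw [hσ i]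
      _ = ∑ i, hd'.1.1.eigenvalues i ^ 2 := Equiv.sum_comp σ (fun i => hd'.1.1.eigenvalues i ^ 2)
  have hC := sum_sq_eig hd.1.1
  rw [hsum, sum_sq_eig hd'.1.1, trace_sq hn, trace_sq hn] at hC
  have hR : a*a + b*b + b*b + (1-a)*(1-a) = a'*a' + b'*b' + b'*b' + (1-a')*(1-a') := by
    exact_mod_cast hC.symm
  have hbb : b = b' := by
    have hb2 : b ^ 2 = b' ^ 2 := by
      rw [haa] at hR; nlinarith [hR]
    rw [← Real.sqrt_sq hb, ← Real.sqrt_sq hb', hb2]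
  refine ⟨hbb, Or.inl haa, fun hcase => ?_⟩
  have hA : (a : ℂ) = 1 - a' := by
    rw [hcase]; push_cast; ring
  have hB : (b : ℂ) = b' := by exact_mod_cast hbb
  rw [conj_ghz, hA, hB, sub_sub_cancel]
end
end

section
/- Let n ≥ 3, |ψ⟩ = (1/√2)(|0⋯0⟩ + |1⋯1⟩) the n-qubit GHZ state, and suppose U = g_1⊗⋯⊗g_n with all g_k diagonal unitaries, g_k = λ_k diag(e^{it_k}, e^{-it_k}), satisfies U|ψ⟩⟨ψ|U† = |ψ⟩⟨ψ|. Then Σ_k t_k is an integer multiple of π. -/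
open Matrix Complex
open scoped ComplexOrder

noncomputable section

/-- A diagonal local unitary stabilizing the GHZ projector has phase angles
summing to an integer multiple of `π`. -/
theorem ghz_diagonal_stabilizer_phase_sum {n : ℕ} (hn : 3 ≤ n)
    (g : Fin n → Matrix (Fin 2) (Fin 2) ℂ) (lam : Fin n → ℂ) (t : Fin n → ℝ)
    (hlam : ∀ k, ‖lam k‖ = 1)
    (hgk : ∀ k, g k = lam k • diagZ (t k))
    (hstab : tensorLocal g * projector (ghz n) * (tensorLocal g)ᴴ = projector (ghz n)) :
    ∃ m : ℤ, ∑ k, t k = m * Real.pi := by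
  have hne : Nonempty (Fin n) := ⟨⟨0, by omega⟩⟩
  set I0 : Fin n → Fin 2 := fun _ => 0 with hI0
  set I1 : Fin n → Fin 2 := fun _ => 1 with hI1
  have hI01 : I0 ≠ I1 := by
    intro h
    have := congrFun h hne.some
    simp [hI0, hI1] at this
  -- tensorLocal g is diagonal
  set d : (Fin n → Fin 2) → ℂ := fun I => ∏ k, g k (I k) (I k) with hd
  have hdiag : tensorLocal g = Matrix.diagonal d := by
    ext I J
    simp only [tensorLocal, Matrix.of_apply, Matrix.diagonal_apply]
    by_cases h : I = J
    · subst h; simp [hd]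
    · rw [if_neg h]
      obtain ⟨k, hk⟩ := Function.ne_iff.mp h
      apply Finset.prod_eq_zero (Finset.mem_univ k)
      rw [hgk k]
      simp [diagZ, Matrix.diagonal_apply_ne _ hk]
  -- entry equation
  have hent : d I0 * projector (ghz n) I0 I1 * star (d I1) = projector (ghz n) I0 I1 := by
    have h := congrFun (congrFun hstab I0) I1
    rw [hdiag, Matrix.diagonal_conjTranspose] at h
    simpa [Matrix.diagonal_mul, Matrix.mul_diagonal, Pi.star_apply, mul_assoc] using h
  have hp : projector (ghz n) I0 I1 = ((1 / Real.sqrt 2 : ℝ) : ℂ) * ((1 / Real.sqrt 2 : ℝ) : ℂ) := by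
    have e0 : (I0 = fun _ => (0 : Fin 2)) := rfl
    have e1 : ¬ (I1 = fun _ => (0 : Fin 2)) := Ne.symm hI01
    have e2 : (I1 = fun _ => (1 : Fin 2)) := rfl
    simp [projector, ghz, if_pos e0, if_neg e1, if_pos e2, Complex.conj_ofReal]
  have hpne : projector (ghz n) I0 I1 ≠ 0 := by
    rw [hp]
    have : Real.sqrt 2 ≠ 0 := by positivity
    simp [this]
  have key : d I0 * star (d I1) = 1 := by
    have h2 : (d I0 * star (d I1)) * projector (ghz n) I0 I1 = 1 * projector (ghz n) I0 I1 := by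
      rw [one_mul]; linear_combination hent
    exact mul_right_cancel₀ hpne h2
  set T : ℝ := ∑ k, t k with hT
  have hd0 : d I0 = (∏ k, lam k) * Complex.exp (Complex.I * T) := by
    have : d I0 = ∏ k, lam k * Complex.exp (Complex.I * t k) := by
      apply Finset.prod_congr rfl
      intro k _
      rw [hgk k]
      simp [diagZ, hI0]
    rw [this, Finset.prod_mul_distrib, ← Complex.exp_sum]
    congr 1
    rw [← Finset.mul_sum, hT]
    push_cast
    ring
  have hd1 : d I1 = (∏ k, lam k) * Complex.exp (-(Complex.I * T)) := by
    have : d I1 = ∏ k, lam k * Complex.exp (-(Complex.I * t k)) := by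
      apply Finset.prod_congr rfl
      intro k _
      rw [hgk k]
      simp [diagZ, hI1]
    rw [this, Finset.prod_mul_distrib, ← Complex.exp_sum]
    congr 1
    rw [hT]
    push_cast
    rw [Finset.mul_sum]
    simp
  have hlam2 : (∏ k, lam k) * star (∏ k, lam k) = 1 := by
    rw [star_prod, ← Finset.prod_mul_distrib]
    apply Finset.prod_eq_one
    intro k _
    have h := hlam k
    rw [Complex.star_def, Complex.mul_conj, Complex.normSq_eq_norm_sq, h]
    norm_num
  have hexp : Complex.exp (Complex.I * (2 * T)) = 1 := by
    rw [hd0, hd1] at key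
    have hs : star ((∏ k, lam k) * Complex.exp (-(Complex.I * T)))
        = star (∏ k, lam k) * Complex.exp (Complex.I * T) := by
      rw [star_mul']
      congr 1
      rw [Complex.star_def, ← Complex.exp_conj]
      congr 1
      simp [Complex.conj_ofReal]
    rw [hs] at key
    calc Complex.exp (Complex.I * (2 * T))
        = Complex.exp (Complex.I * T) * Complex.exp (Complex.I * T) := by
          rw [← Complex.exp_add]; ring_nf
      _ = ((∏ k, lam k) * star (∏ k, lam k)) * (Complex.exp (Complex.I * T) * Complex.exp (Complex.I * T)) := by
          rw [hlam2, one_mul]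
      _ = (∏ k, lam k) * Complex.exp (Complex.I * T) * (star (∏ k, lam k) * Complex.exp (Complex.I * T)) := by ring
      _ = 1 := key
  rw [Complex.exp_eq_one_iff] at hexp
  obtain ⟨m, hm⟩ := hexp
  refine ⟨m, ?_⟩
  have h2 : Complex.I * (2 * (T : ℂ)) = Complex.I * ((m : ℂ) * (2 * (Real.pi : ℂ))) := by
    rw [hm]; ring
  have h3 := mul_left_cancel₀ Complex.I_ne_zero h2
  have hr : 2 * T = (m : ℝ) * (2 * Real.pi) := by exact_mod_cast h3
  linarith
end
end

section
/- Let n ≥ 3, a, b ∈ ℂ nonzero with |a| ≠ |b|, and |ψ⟩ = a|0⋯0⟩ + b|1⋯1⟩ the generalized GHZ state. If U = g_1⊗⋯⊗g_n with each g_k ∈ U(2) satisfies U|ψ⟩ = λ|ψ⟩ for some unit-modulus λ, and each g_k is either diagonal or antidiagonal, then every g_k is diagonal. -/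
open Matrix Complex
open scoped ComplexOrder

noncomputable section

/-- For a generalized GHZ state with `|a| ≠ |b|`, a local unitary stabilizer
whose factors are all diagonal or antidiagonal must have all factors
diagonal. -/
theorem genGHZ_stabilizer_all_diagonal {n : ℕ} (hn : 3 ≤ n)
    (a b : ℂ) (ha : a ≠ 0) (hb : b ≠ 0) (hab : ‖a‖ ≠ ‖b‖)
    (ψ : (Fin n → Fin 2) → ℂ)
    (hψ : ψ = fun I => if I = (fun _ => 0) then a else if I = (fun _ => 1) then b else 0)
    (g : Fin n → Matrix (Fin 2) (Fin 2) ℂ)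
    (hg : ∀ k, g k ∈ Matrix.unitaryGroup (Fin 2) ℂ)
    (hdoa : ∀ k, (g k 0 1 = 0 ∧ g k 1 0 = 0) ∨ (g k 0 0 = 0 ∧ g k 1 1 = 0))
    (lam : ℂ) (hlam : ‖lam‖ = 1)
    (hstab : (tensorLocal g).mulVec ψ = lam • ψ) :
    ∀ k, g k 0 1 = 0 ∧ g k 1 0 = 0 := by
  by_cases hall : ∀ k, g k 0 1 = 0 ∧ g k 1 0 = 0
  · exact hall
  exfalso
  push_neg at hall
  obtain ⟨k, hk⟩ := hall
  have hkanti : g k 0 0 = 0 ∧ g k 1 1 = 0 := by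
    rcases hdoa k with h | h
    · exact absurd h.2 (hk h.1)
    · exact h
  subst hψ
  have hzo : (fun _ : Fin n => (0 : Fin 2)) ≠ (fun _ => 1) := by
    intro h
    have := congrFun h ⟨0, by omega⟩
    simp at this
  -- key computation of the mulVec at an arbitrary index I
  have hkey : ∀ I : Fin n → Fin 2,
      ((tensorLocal g).mulVec (fun J => if J = (fun _ => 0) then a
        else if J = (fun _ => 1) then b else 0)) I
        = (∏ i, g i (I i) 0) * a + (∏ i, g i (I i) 1) * b := by
    intro I
    have step : ∀ J : Fin n → Fin 2,
        (∏ i, g i (I i) (J i)) * (if J = (fun _ => 0) then a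
          else if J = (fun _ => 1) then b else 0)
        = (if J = (fun _ => 0) then (∏ i, g i (I i) 0) * a else 0)
          + (if J = (fun _ => 1) then (∏ i, g i (I i) 1) * b else 0) := by
      intro J
      by_cases h1 : J = (fun _ => 0)
      · subst h1; simp [hzo]
      · by_cases h2 : J = (fun _ => 1)
        · subst h2; simp [h1]
        · simp [h1, h2]
    simp only [Matrix.mulVec, dotProduct, tensorLocal, Matrix.of_apply]
    rw [Finset.sum_congr rfl (fun J _ => step J), Finset.sum_add_distrib]
    simp
  have hz0 := congrFun hstab (fun _ => 0)
  rw [hkey] at hz0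
  simp only [Pi.smul_apply, if_pos rfl, if_true, smul_eq_mul] at hz0
  have hlam0 : lam ≠ 0 := by
    intro h; rw [h] at hlam; simp at hlam
  by_cases hdall : ∀ l, g l 0 0 = 0 ∧ g l 1 1 = 0
  · -- all antidiagonal
    have hp00 : (∏ i, g i ((fun _ : Fin n => (0:Fin 2)) i) 0) = 0 :=
      Finset.prod_eq_zero (Finset.mem_univ k) hkanti.1
    rw [hp00, zero_mul, zero_add] at hz0
    -- each antidiagonal unitary has |g 0 1| = 1
    have hnorm : ∀ l, ‖g l 0 1‖ = 1 := by
      intro l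
      have h1 : (star (g l) * g l) 1 1 = (1 : Matrix (Fin 2) (Fin 2) ℂ) 1 1 := by
        rw [(hg l).1]
      rw [Matrix.mul_apply, Fin.sum_univ_two] at h1
      simp only [Matrix.star_apply, Matrix.one_apply_eq, (hdall l).2, star_zero,
        mul_zero, zero_mul, add_zero] at h1
      have habs := congrArg norm h1
      rw [norm_mul, norm_one] at habs
      simp only [Complex.star_def, Complex.norm_conj] at habs
      nlinarith [norm_nonneg (g l 0 1)]
    have habsz := congrArg norm hz0
    rw [norm_mul, norm_mul] at habsz
    have hprod : ‖∏ i, g i ((fun _ : Fin n => (0:Fin 2)) i) 1‖ = 1 := by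
      rw [norm_prod, Finset.prod_congr rfl (fun i _ => hnorm i),
        Finset.prod_const_one]
    rw [hprod, one_mul] at habsz
    have hlamabs : ‖lam‖ = 1 := hlam
    rw [hlamabs, one_mul] at habsz
    exact hab habsz.symm
  · -- mixed: some factor diagonal, k antidiagonal
    push_neg at hdall
    obtain ⟨l, hl⟩ := hdall
    have hldiag : g l 0 1 = 0 ∧ g l 1 0 = 0 := by
      rcases hdoa l with h | h
      · exact h
      · exact absurd h (by intro h'; exact hl h'.1 h'.2)
    have hp00 : (∏ i, g i ((fun _ : Fin n => (0:Fin 2)) i) 0) = 0 :=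
      Finset.prod_eq_zero (Finset.mem_univ k) hkanti.1
    have hp01 : (∏ i, g i ((fun _ : Fin n => (0:Fin 2)) i) 1) = 0 :=
      Finset.prod_eq_zero (Finset.mem_univ l) hldiag.1
    rw [hp00, hp01, zero_mul, zero_mul, add_zero] at hz0
    exact ha (by
      have := hz0.symm
      rcases mul_eq_zero.mp this with h | h
      · exact absurd h hlam0
      · exact h)
end
end

section
/- Let n ≥ 2, 0 < k < n, and suppose U = g_1⊗⋯⊗g_n with each g_j a diagonal unitary g_j = λ_j diag(e^{it_j}, e^{-it_j}), satisfies U|D_n^{(k)}⟩⟨D_n^{(k)}|U† = |D_n^{(k)}⟩⟨D_n^{(k)}|. Then for every pair j, ℓ, t_j − t_ℓ is an integer multiple of π; consequently all g_j are projectively equal, i.e. g_j = μ_j g_1 for unit-modulus scalars μ_j. -/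
open Matrix Complex
open scoped ComplexOrder

noncomputable section

lemma tensorLocal_diag {n : ℕ} (g : Fin n → Matrix (Fin 2) (Fin 2) ℂ)
    (hdiag : ∀ i x y, x ≠ y → g i x y = 0) :
    tensorLocal g = Matrix.diagonal (fun I => ∏ i, g i (I i) (I i)) := by
  ext I J
  by_cases h : I = J
  · subst h; simp [tensorLocal]
  · rw [Matrix.diagonal_apply_ne _ h]
    obtain ⟨i, hi⟩ := Function.ne_iff.mp h
    exact Finset.prod_eq_zero (Finset.mem_univ i) (hdiag i _ _ hi)

lemma indicator_weight {n : ℕ} (A : Finset (Fin n)) :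
    (∑ i, Fin.val (if i ∈ A then (1 : Fin 2) else 0)) = A.card := by
  have h : ∀ i, Fin.val (if i ∈ A then (1 : Fin 2) else 0) = if i ∈ A then 1 else 0 := by
    intro i; split <;> rfl
  simp [h]

/-- A diagonal local unitary stabilizing a Dicke projector with `0 < k < n`
has all phase differences integer multiples of `π`; hence all factors are
projectively equal. -/
theorem dicke_diagonal_stabilizer_phases {n k : ℕ} (hn : 2 ≤ n)
    (hk0 : 0 < k) (hkn : k < n)
    (g : Fin n → Matrix (Fin 2) (Fin 2) ℂ) (lam : Fin n → ℂ) (t : Fin n → ℝ)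
    (hlam : ∀ j, ‖lam j‖ = 1)
    (hgj : ∀ j, g j = lam j • diagZ (t j))
    (hstab : tensorLocal g * projector (dicke n k) * (tensorLocal g)ᴴ =
      projector (dicke n k)) :
    (∀ j ℓ : Fin n, ∃ m : ℤ, t j - t ℓ = m * Real.pi) ∧
    (∀ j : Fin n, ∃ μ : ℂ, ‖μ‖ = 1 ∧ g j = μ • g ⟨0, by omega⟩) := by
  classical
  set z : Fin n := ⟨0, by omega⟩ with hz
  -- diagonal entries of g
  have hdiag : ∀ i x y, x ≠ y → g i x y = 0 := by
    intro i x y hxy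
    rw [hgj i]
    simp [diagZ, Matrix.diagonal_apply_ne _ hxy]
  set d : (Fin n → Fin 2) → ℂ := fun I => ∏ i, g i (I i) (I i) with hd
  set c : ℂ := ((1 / Real.sqrt (n.choose k) : ℝ) : ℂ) with hcdef
  have hcpos : (0 : ℝ) < 1 / Real.sqrt (n.choose k) := by
    have : (0:ℝ) < (n.choose k : ℝ) := by
      exact_mod_cast Nat.choose_pos (le_of_lt hkn)
    positivity
  have hc0 : c ≠ 0 := by
    simp only [hcdef, ne_eq, Complex.ofReal_eq_zero]
    exact ne_of_gt hcpos
  -- norm-1 of diagonal entries of g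
  have hnorm : ∀ i x, ‖g i x x‖ = 1 := by
    intro i x
    rw [hgj i]
    have hre : ∀ r : ℝ, ‖Complex.exp (Complex.I * (r:ℂ))‖ = 1 := by
      intro r
      rw [Complex.norm_exp]
      simp [Complex.mul_re]
    have hre' : ∀ r : ℝ, ‖Complex.exp (-(Complex.I * (r:ℂ)))‖ = 1 := by
      intro r
      rw [Complex.norm_exp]
      simp [Complex.mul_re]
    fin_cases x <;>
      simp [diagZ, Matrix.smul_apply, norm_mul, hlam i, hre, hre',
        Matrix.diagonal_apply_eq]
  have hone : ∀ i x, g i x x * (starRingEnd ℂ) (g i x x) = 1 := by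
    intro i x
    rw [Complex.mul_conj]
    rw [Complex.normSq_eq_norm_sq]
    have := hnorm i x
    rw [this]
    norm_num
  -- main phase relation for distinct positions
  have main : ∀ j ℓ : Fin n, j ≠ ℓ →
      Complex.exp (Complex.I * (2 * ((t j : ℂ) - (t ℓ : ℂ)))) = 1 := by
    intro j ℓ hjl
    -- build weight-k strings I, J differing only at j, ℓ
    have hcard : k - 1 ≤ (((Finset.univ : Finset (Fin n)).erase j).erase ℓ).card := by
      have hℓ : ℓ ∈ (Finset.univ : Finset (Fin n)).erase j :=
        Finset.mem_erase.mpr ⟨(Ne.symm hjl), Finset.mem_univ ℓ⟩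
      rw [Finset.card_erase_of_mem hℓ, Finset.card_erase_of_mem (Finset.mem_univ j)]
      simp only [Finset.card_univ, Fintype.card_fin]
      omega
    obtain ⟨T, hTsub, hTcard⟩ := Finset.exists_subset_card_eq hcard
    have hjT : j ∉ T := fun h => by
      have := hTsub h
      exact (Finset.mem_erase.mp (Finset.mem_of_mem_erase this)).1 rfl
    have hℓT : ℓ ∉ T := fun h => (Finset.mem_erase.mp (hTsub h)).1 rfl
    set S : Finset (Fin n) := insert ℓ T with hS
    set S' : Finset (Fin n) := insert j T with hS'
    have hScard : S.card = k := by
      rw [hS, Finset.card_insert_of_notMem hℓT, hTcard]; omega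
    have hS'card : S'.card = k := by
      rw [hS', Finset.card_insert_of_notMem hjT, hTcard]; omega
    set I : Fin n → Fin 2 := fun i => if i ∈ S then 1 else 0 with hI
    set J : Fin n → Fin 2 := fun i => if i ∈ S' then 1 else 0 with hJ
    have hIj : I j = 0 := by
      simp only [hI, hS, Finset.mem_insert, if_neg, ite_eq_right_iff]
      intro h; exact absurd h (by simp [hjl, hjT])
    have hJj : J j = 1 := by simp [hJ, hS']
    have hIℓ : I ℓ = 1 := by simp [hI, hS]
    have hJℓ : J ℓ = 0 := by
      simp only [hJ, hS', Finset.mem_insert, ite_eq_right_iff]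
      intro h; exact absurd h (by simp [Ne.symm hjl, hℓT])
    have hIJ : ∀ i, i ≠ j → i ≠ ℓ → I i = J i := by
      intro i hij hiℓ
      simp only [hI, hJ, hS, hS', Finset.mem_insert]
      simp [hij, hiℓ]
    have hwI : (∑ i, (I i : ℕ)) = k := by
      have h1 := indicator_weight S
      rw [hScard] at h1
      exact h1
    have hwJ : (∑ i, (J i : ℕ)) = k := by
      have h1 := indicator_weight S'
      rw [hS'card] at h1
      exact h1
    have hdI : dicke n k I = c := by
      simp only [dicke]
      rw [if_pos hwI]
    have hdJ : dicke n k J = c := by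
      simp only [dicke]
      rw [if_pos hwJ]
    -- entrywise stabilizer equation
    have hent : d I * (projector (dicke n k) I J) * star (d J) =
        projector (dicke n k) I J := by
      have h0 : (tensorLocal g * projector (dicke n k) * (tensorLocal g)ᴴ) I J =
          projector (dicke n k) I J := by rw [hstab]
      rw [tensorLocal_diag g hdiag, Matrix.diagonal_conjTranspose] at h0
      rw [Matrix.mul_diagonal, Matrix.diagonal_mul] at h0
      exact h0
    have hPIJ : projector (dicke n k) I J = c * (starRingEnd ℂ) c := by
      simp [projector, hdI, hdJ]
    have hP0 : c * (starRingEnd ℂ) c ≠ 0 :=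
      mul_ne_zero hc0 (by simpa using hc0)
    have hkey : d I * star (d J) = 1 := by
      have h2 : (d I * star (d J)) * (c * (starRingEnd ℂ) c) =
          1 * (c * (starRingEnd ℂ) c) := by
        rw [one_mul, ← hPIJ]
        rw [hPIJ] at hent ⊢
        ring_nf
        ring_nf at hent
        linear_combination hent
      exact mul_right_cancel₀ hP0 h2
    -- compute d I * star (d J)
    set f : Fin n → ℂ := fun i => g i (I i) (I i) * (starRingEnd ℂ) (g i (J i) (J i))
      with hf
    have hprodf : d I * star (d J) = ∏ i, f i := by
      rw [hd]
      simp only [star_prod, ← Finset.prod_mul_distrib]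
      rfl
    have hfone : ∀ i, i ≠ j → i ≠ ℓ → f i = 1 := by
      intro i hij hiℓ
      simp only [hf]
      rw [← hIJ i hij hiℓ]
      exact hone i (I i)
    have hprod2 : ∏ i, f i = f j * f ℓ := by
      have hℓmem : ℓ ∈ (Finset.univ : Finset (Fin n)).erase j :=
        Finset.mem_erase.mpr ⟨Ne.symm hjl, Finset.mem_univ ℓ⟩
      rw [← Finset.mul_prod_erase _ f (Finset.mem_univ j),
        ← Finset.mul_prod_erase _ f hℓmem]
      rw [Finset.prod_eq_one, mul_one]
      intro i hi
      obtain ⟨hiℓ, hi'⟩ := Finset.mem_erase.mp hi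
      obtain ⟨hij, _⟩ := Finset.mem_erase.mp hi'
      exact hfone i hij hiℓ
    have hgj00 : g j 0 0 = lam j * Complex.exp (Complex.I * (t j : ℂ)) := by
      rw [hgj j]; simp [diagZ, Matrix.smul_apply]
    have hgj11 : g j 1 1 = lam j * Complex.exp (-(Complex.I * (t j : ℂ))) := by
      rw [hgj j]; simp [diagZ, Matrix.smul_apply]
    have hconj : ∀ w : ℂ, (starRingEnd ℂ) (Complex.exp w) =
        Complex.exp ((starRingEnd ℂ) w) := fun w => (Complex.exp_conj w).symm
    have hfj : f j = Complex.exp (2 * Complex.I * (t j : ℂ)) := by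
      simp only [hf, hIj, hJj, hgj00, hgj11]
      rw [_root_.map_mul, hconj]
      have hl : lam j * ((starRingEnd ℂ) (lam j)) = 1 := by
        rw [Complex.mul_conj, Complex.normSq_eq_norm_sq, hlam j]
        norm_num
      have hw : (starRingEnd ℂ) (-(Complex.I * (t j : ℂ))) = Complex.I * (t j : ℂ) := by
        simp [Complex.conj_I, Complex.conj_ofReal]
      rw [hw]
      calc lam j * Complex.exp (Complex.I * ↑(t j)) *
            ((starRingEnd ℂ) (lam j) * Complex.exp (Complex.I * ↑(t j)))
          = (lam j * (starRingEnd ℂ) (lam j)) *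
            (Complex.exp (Complex.I * ↑(t j)) * Complex.exp (Complex.I * ↑(t j))) := by
            ring
        _ = Complex.exp (2 * Complex.I * (t j : ℂ)) := by
            rw [hl, one_mul, ← Complex.exp_add]; congr 1; ring
    have hgℓ00 : g ℓ 0 0 = lam ℓ * Complex.exp (Complex.I * (t ℓ : ℂ)) := by
      rw [hgj ℓ]; simp [diagZ, Matrix.smul_apply]
    have hgℓ11 : g ℓ 1 1 = lam ℓ * Complex.exp (-(Complex.I * (t ℓ : ℂ))) := by
      rw [hgj ℓ]; simp [diagZ, Matrix.smul_apply]
    have hfℓ : f ℓ = Complex.exp (-(2 * Complex.I * (t ℓ : ℂ))) := by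
      simp only [hf, hIℓ, hJℓ, hgℓ00, hgℓ11]
      rw [_root_.map_mul, hconj]
      have hl : lam ℓ * ((starRingEnd ℂ) (lam ℓ)) = 1 := by
        rw [Complex.mul_conj, Complex.normSq_eq_norm_sq, hlam ℓ]
        norm_num
      have hw : (starRingEnd ℂ) (Complex.I * (t ℓ : ℂ)) = -(Complex.I * (t ℓ : ℂ)) := by
        simp [Complex.conj_I, Complex.conj_ofReal]
      rw [hw]
      calc lam ℓ * Complex.exp (-(Complex.I * ↑(t ℓ))) *
            ((starRingEnd ℂ) (lam ℓ) * Complex.exp (-(Complex.I * ↑(t ℓ))))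
          = (lam ℓ * (starRingEnd ℂ) (lam ℓ)) *
            (Complex.exp (-(Complex.I * ↑(t ℓ))) * Complex.exp (-(Complex.I * ↑(t ℓ)))) := by
            ring
        _ = Complex.exp (-(2 * Complex.I * (t ℓ : ℂ))) := by
            rw [hl, one_mul, ← Complex.exp_add]; ring_nf
    have : Complex.exp (2 * Complex.I * (t j : ℂ)) *
        Complex.exp (-(2 * Complex.I * (t ℓ : ℂ))) = 1 := by
      rw [← hfj, ← hfℓ, ← hprod2, ← hprodf, hkey]
    rw [← Complex.exp_add] at this
    rw [show Complex.I * (2 * ((t j : ℂ) - (t ℓ : ℂ))) =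
      2 * Complex.I * (t j : ℂ) + -(2 * Complex.I * (t ℓ : ℂ)) by ring]
    exact this
  -- extract integer multiples of π
  have part1 : ∀ j ℓ : Fin n, ∃ m : ℤ, t j - t ℓ = m * Real.pi := by
    intro j ℓ
    by_cases hjl : j = ℓ
    · exact ⟨0, by simp [hjl]⟩
    · obtain ⟨m, hm⟩ := Complex.exp_eq_one_iff.mp (main j ℓ hjl)
      refine ⟨m, ?_⟩
      have him := congrArg Complex.im hm
      simp [Complex.mul_im, Complex.mul_re, Complex.ofReal_re, Complex.ofReal_im] at him
      nlinarith [Real.pi_pos, him]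
  refine ⟨part1, ?_⟩
  intro j
  by_cases hj0 : j = z
  · exact ⟨1, by norm_num, by rw [hj0, one_smul]⟩
  · obtain ⟨m, hm⟩ := part1 j z
    have hexp1 : Complex.exp (Complex.I * (2 * ((t j : ℂ) - (t z : ℂ)))) = 1 :=
      main j z hj0
    refine ⟨lam j * (starRingEnd ℂ) (lam z) *
      Complex.exp (Complex.I * ((t j : ℂ) - (t z : ℂ))), ?_, ?_⟩
    · rw [norm_mul, norm_mul, RCLike.norm_conj, hlam j, hlam z]
      rw [Complex.norm_exp]
      simp [Complex.mul_re]
    · rw [hgj j, hgj z, smul_smul]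
      have hlz : (starRingEnd ℂ) (lam z) * lam z = 1 := by
        rw [mul_comm, Complex.mul_conj, Complex.normSq_eq_norm_sq,
          hlam z]
        norm_num
      have hmu : lam j * (starRingEnd ℂ) (lam z) *
          Complex.exp (Complex.I * ((t j : ℂ) - (t z : ℂ))) * lam z =
          lam j * Complex.exp (Complex.I * ((t j : ℂ) - (t z : ℂ))) := by
        calc lam j * (starRingEnd ℂ) (lam z) *
            Complex.exp (Complex.I * ((t j : ℂ) - (t z : ℂ))) * lam z
            = ((starRingEnd ℂ) (lam z) * lam z) *
              (lam j * Complex.exp (Complex.I * ((t j : ℂ) - (t z : ℂ)))) := by ring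
          _ = lam j * Complex.exp (Complex.I * ((t j : ℂ) - (t z : ℂ))) := by
              rw [hlz, one_mul]
      rw [hmu]
      ext x y
      simp only [Matrix.smul_apply, smul_eq_mul]
      by_cases hxy : x = y
      · subst hxy
        fin_cases x
        · simp only [diagZ, Matrix.diagonal_apply_eq, Fin.mk_zero, Fin.mk_one,
            Matrix.cons_val_zero, Matrix.cons_val_one, Matrix.head_cons]
          rw [mul_assoc, ← Complex.exp_add]
          congr 2
          ring
        · simp only [diagZ, Matrix.diagonal_apply_eq, Fin.mk_zero, Fin.mk_one,
            Matrix.cons_val_zero, Matrix.cons_val_one, Matrix.head_cons]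
          have h2 : Complex.exp (Complex.I * ((t j : ℂ) - (t z : ℂ))) *
              Complex.exp (-(Complex.I * (t z : ℂ))) =
              Complex.exp (-(Complex.I * (t j : ℂ))) := by
            rw [← Complex.exp_add,
              show Complex.I * ((t j : ℂ) - (t z : ℂ)) + -(Complex.I * (t z : ℂ)) =
                -(Complex.I * (t j : ℂ)) + Complex.I * (2 * ((t j : ℂ) - (t z : ℂ))) by
                ring,
              Complex.exp_add, hexp1, mul_one]
          rw [mul_assoc, h2]
      · rw [diagZ, diagZ, Matrix.diagonal_apply_ne _ hxy, Matrix.diagonal_apply_ne _ hxy]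
        ring
end
end

section
/- Let h ∈ U(2) and suppose the rotation of the Bloch sphere (unit sphere in ℝ³) induced by h maps the set of vertices of a regular n-gon (n ≥ 3) inscribed in the equatorial plane {z = 0} into itself. Then, as a rotation of ℝ³, h is either a rotation about the z-axis or a rotation by π about an axis in the equatorial plane; correspondingly h is projectively equal to a diagonal or an antidiagonal 2×2 unitary. -/
open Matrix Complex
open scoped ComplexOrder

noncomputable section

/-- Pauli matrices and `v · σ`. -/
def pauliX : Matrix (Fin 2) (Fin 2) ℂ := !![0, 1; 1, 0]
def pauliY : Matrix (Fin 2) (Fin 2) ℂ := !![0, -Complex.I; Complex.I, 0]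
def pauliZ : Matrix (Fin 2) (Fin 2) ℂ := !![1, 0; 0, -1]

def dotSigma (v : Fin 3 → ℝ) : Matrix (Fin 2) (Fin 2) ℂ :=
  ((v 0 : ℂ) • pauliX) + ((v 1 : ℂ) • pauliY) + ((v 2 : ℂ) • pauliZ)

/-- Vertices of the regular n-gon inscribed in the equatorial plane. -/
def ngonVertex (n : ℕ) (j : Fin n) : Fin 3 → ℝ :=
  ![Real.cos (2 * Real.pi * (j : ℝ) / (n : ℝ)),
    Real.sin (2 * Real.pi * (j : ℝ) / (n : ℝ)), 0]

/-- If the Bloch-sphere rotation induced by `h ∈ U(2)` maps the vertex set of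
a regular `n`-gon (`n ≥ 3`) in the equatorial plane into itself, then it is a
rotation about the z-axis (and `h` is diagonal up to phase) or a rotation by
`π` about an equatorial axis (and `h` is antidiagonal up to phase). -/
theorem ngon_symmetry_diag_or_antidiag {n : ℕ} (hn : 3 ≤ n)
    (h : Matrix (Fin 2) (Fin 2) ℂ) (hh : h ∈ Matrix.unitaryGroup (Fin 2) ℂ)
    (R : Matrix (Fin 3) (Fin 3) ℝ)
    (hR : R ∈ Matrix.specialOrthogonalGroup (Fin 3) ℝ)
    (hcompat : ∀ v : Fin 3 → ℝ, h * dotSigma v * hᴴ = dotSigma (R.mulVec v))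
    (hngon : ∀ j : Fin n, ∃ j' : Fin n, R.mulVec (ngonVertex n j) = ngonVertex n j') :
    (R.mulVec ![0, 0, 1] = ![0, 0, 1] ∧ h 0 1 = 0 ∧ h 1 0 = 0) ∨
    (R.mulVec ![0, 0, 1] = ![0, 0, -1] ∧ h 0 0 = 0 ∧ h 1 1 = 0) := by
  have hnR : (0:ℝ) < n := by positivity
  -- Step 1: third row of R has zero first two entries
  have h20 : R 2 0 = 0 := by
    obtain ⟨j', hj'⟩ := hngon ⟨0, by omega⟩
    have := congrFun hj' 2
    simpa [Matrix.mulVec, dotProduct, ngonVertex, Fin.sum_univ_three] using this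
  have h21 : R 2 1 = 0 := by
    obtain ⟨j', hj'⟩ := hngon ⟨1, by omega⟩
    have h2 := congrFun hj' 2
    have hsin : Real.sin (2 * Real.pi / (n:ℝ)) ≠ 0 := by
      have hpi := Real.pi_pos
      apply ne_of_gt
      apply Real.sin_pos_of_pos_of_lt_pi
      · positivity
      · rw [div_lt_iff₀ hnR]
        have : (3:ℝ) ≤ n := by exact_mod_cast hn
        nlinarith
    simp [Matrix.mulVec, dotProduct, ngonVertex, Fin.sum_univ_three, h20, hsin] at h2
    exact h2
  -- orthogonality
  have horth : R * star R = 1 ∧ star R * R = 1 := ⟨(hR.1).2, (hR.1).1⟩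
  have hrow : R 2 0 * R 2 0 + R 2 1 * R 2 1 + R 2 2 * R 2 2 = 1 := by
    have := congrFun (congrFun horth.1 2) 2
    simpa [Matrix.mul_apply, Fin.sum_univ_three, Matrix.one_apply, star] using this
  have hcol : R 0 2 * R 0 2 + R 1 2 * R 1 2 + R 2 2 * R 2 2 = 1 := by
    have := congrFun (congrFun horth.2 2) 2
    simpa [Matrix.mul_apply, Fin.sum_univ_three, Matrix.one_apply, star] using this
  have h22sq : R 2 2 * R 2 2 = 1 := by rw [h20, h21] at hrow; linarith
  have h02 : R 0 2 = 0 := by nlinarith [sq_nonneg (R 0 2), sq_nonneg (R 1 2)]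
  have h12 : R 1 2 = 0 := by nlinarith [sq_nonneg (R 0 2), sq_nonneg (R 1 2)]
  have h22 : R 2 2 = 1 ∨ R 2 2 = -1 := by
    rcases mul_eq_zero.mp (show (R 2 2 - 1) * (R 2 2 + 1) = 0 by ring_nf; linarith) with h' | h'
    · left; linarith
    · right; linarith
  have hmv : R.mulVec ![0,0,1] = ![0, 0, R 2 2] := by
    funext i
    fin_cases i <;>
      simp [Matrix.mulVec, dotProduct, Fin.sum_univ_three, h02, h12]
  -- compatibility at e₃
  have hZ := hcompat ![0,0,1]
  rw [hmv] at hZ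
  have hunit : hᴴ * h = 1 := by
    have := hh.1; rwa [Matrix.star_eq_conjTranspose] at this
  have hds1 : dotSigma ![0,0,1] = pauliZ := by simp [dotSigma]
  rcases h22 with h22 | h22
  · left
    rw [h22] at hZ
    have hZ' : h * pauliZ = pauliZ * h := by
      rw [hds1] at hZ
      calc h * pauliZ = h * pauliZ * (hᴴ * h) := by rw [hunit, mul_one]
        _ = (h * pauliZ * hᴴ) * h := by rw [mul_assoc, mul_assoc, mul_assoc]
        _ = pauliZ * h := by rw [hZ]
    have e01 := congrFun (congrFun hZ' 0) 1
    have e10 := congrFun (congrFun hZ' 1) 0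
    simp [Matrix.mul_apply, Matrix.vecMul, dotProduct, Fin.sum_univ_two, pauliZ] at e01 e10
    refine ⟨by rw [hmv, h22], ?_, ?_⟩
    · linear_combination (-1/2 : ℂ) * e01
    · linear_combination (1/2 : ℂ) * e10
  · right
    rw [h22] at hZ
    have hZ' : h * pauliZ = -(pauliZ * h) := by
      have hds : dotSigma ![0,0,(-1:ℝ)] = -pauliZ := by
        simp [dotSigma]
      rw [hds1, hds] at hZ
      calc h * pauliZ = h * pauliZ * (hᴴ * h) := by rw [hunit, mul_one]
        _ = (h * pauliZ * hᴴ) * h := by rw [mul_assoc, mul_assoc, mul_assoc]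
        _ = -(pauliZ * h) := by rw [hZ, neg_mul]
    have e00 := congrFun (congrFun hZ' 0) 0
    have e11 := congrFun (congrFun hZ' 1) 1
    simp [Matrix.mul_apply, Matrix.vecMul, dotProduct, Fin.sum_univ_two, pauliZ] at e00 e11
    refine ⟨by rw [hmv, h22], ?_, ?_⟩
    · linear_combination (1/2 : ℂ) * e00
    · linear_combination (-1/2 : ℂ) * e11
end
end
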